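/- arXiv:1610.01106 — 2 statements merged into one kernel-verified Lean document; each statement's English description precedes it below -/
import Mathlib

section
/- Every simple even-cycle matroid of rank r has at most r^2 - r + 1 elements in its ground set. -/
open Set Matroid

noncomputable section

/-- Augmentation property for linear independence of columns. -/
theorem colIndep_aug {K V n : Type*} [Field K] [AddCommGroup V] [Module K V]
    [FiniteDimensional K V] [Finite n] (v : n → V) {I J : Set n}
    (hI : LinearIndependent K (fun i : I => v i)) (hJ : LinearIndependent K (fun i : J => v i))
    (hcard : I.ncard < J.ncard) :
    ∃ e ∈ J, e ∉ I ∧ LinearIndependent K (fun i : ↥(insert e I) => v i) := by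
  classical
  by_contra h
  push_neg at h
  have hspan : ∀ e ∈ J, v e ∈ Submodule.span K (v '' I) := by
    intro e he
    by_cases heI : e ∈ I
    · exact Submodule.subset_span ⟨e, heI, rfl⟩
    by_contra hsp
    exact h e he heI ((linearIndepOn_insert heI).2 ⟨hI, hsp⟩)
  have hle : Submodule.span K (v '' J) ≤ Submodule.span K (v '' I) := by
    rw [Submodule.span_le]
    rintro _ ⟨e, he, rfl⟩
    exact hspan e he
  haveI : Fintype I := (Set.toFinite I).fintype
  haveI : Fintype J := (Set.toFinite J).fintype
  have hIcard : Module.finrank K (Submodule.span K (v '' I)) = I.ncard := by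
    rw [Set.image_eq_range, finrank_span_eq_card hI, Set.ncard_eq_toFinset_card',
      Set.toFinset_card]
  have hJcard : Module.finrank K (Submodule.span K (v '' J)) = J.ncard := by
    rw [Set.image_eq_range, finrank_span_eq_card hJ, Set.ncard_eq_toFinset_card',
      Set.toFinset_card]
  have := Submodule.finrank_mono (R := K) hle
  omega

/-- The column matroid of a matrix over `GF(2)`: the matroid on the columns of `A`,
where a set of columns is independent iff it is linearly independent over `GF(2)`. -/
def colMatroid {m n : Type*} [Fintype m] [Fintype n] (A : Matrix m n (ZMod 2)) : Matroid n :=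
  (IndepMatroid.ofFinite (Set.finite_univ (α := n))
    (fun I => LinearIndependent (ZMod 2) (fun i : I => A.transpose i))
    linearIndependent_empty_type
    (fun I J hJ hIJ => hJ.comp (Set.inclusion hIJ) (Set.inclusion_injective hIJ))
    (fun I J hI hJ hc => colIndep_aug A.transpose hI hJ hc)
    (fun I _ => Set.subset_univ I)).matroid

namespace Matroid

/-- Deletion of a set of elements from a matroid. -/
def del {α : Type*} (M : Matroid α) (D : Set α) : Matroid α := M ↾ (M.E \ D)

/-- Contraction of a set of elements from a matroid, defined by duality. -/
def con {α : Type*} (M : Matroid α) (C : Set α) : Matroid α := (M✶.del C)✶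

/-- Matroid isomorphism: a bijection between ground sets preserving independence. -/
def IsoTo {α β : Type*} (M : Matroid α) (N : Matroid β) : Prop :=
  ∃ φ : α → β, Set.BijOn φ M.E N.E ∧ ∀ I ⊆ M.E, (M.Indep I ↔ N.Indep (φ '' I))

/-- `M` has a minor isomorphic to `N`. -/
def HasMinorIsoTo {α β : Type*} (M : Matroid α) (N : Matroid β) : Prop :=
  ∃ C D : Set α, ((M.con C).del D).IsoTo N

/-- A binary matroid: one isomorphic to the column matroid of a matrix over `GF(2)`. -/
def IsBinary {α : Type*} (M : Matroid α) : Prop :=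
  ∃ (k l : ℕ) (A : Matrix (Fin k) (Fin l) (ZMod 2)), M.IsoTo (colMatroid A)

/-- A simple matroid: no loops and no pair of distinct parallel elements,
i.e. every subset of the ground set of size at most two is independent. -/
def IsSimple' {α : Type*} (M : Matroid α) : Prop :=
  ∀ e ∈ M.E, ∀ f ∈ M.E, M.Indep {e, f}

/-- `N` is a simplification of `M`: `N` is a simple restriction of `M` containing
an element of every parallel class of `M`. -/
def IsSimplificationOf {α : Type*} (N M : Matroid α) : Prop :=
  ∃ S ⊆ M.E, N = M ↾ S ∧ N.IsSimple' ∧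
    ∀ e ∈ M.E, M.Indep {e} → ∃ f ∈ S, e = f ∨ ¬ M.Indep {e, f}

/-- `N` is a cosimplification of `M`: the dual of `N` is a simplification of the dual of `M`. -/
def IsCosimplificationOf {α : Type*} (N M : Matroid α) : Prop :=
  N✶.IsSimplificationOf M✶

/-- A circuit: a minimal dependent set. -/
def IsCircuitOf {α : Type*} (M : Matroid α) (C : Set α) : Prop :=
  C ⊆ M.E ∧ ¬ M.Indep C ∧ ∀ D ⊂ C, M.Indep D

end Matroid

/-- `r` is a row of `A` such that every column of `A` has at most two nonzero entries
outside row `r`. -/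
def EvenCycleRep {m n : Type*} (A : Matrix m n (ZMod 2)) (r : m) : Prop :=
  ∀ j : n, ({i : m | i ≠ r ∧ A i j ≠ 0}).ncard ≤ 2

/-- An even-cycle matroid: one isomorphic to the column matroid of a `GF(2)` matrix having
a row `r` such that every column has at most two nonzero entries outside row `r`. -/
def Matroid.IsEvenCycle {α : Type*} (M : Matroid α) : Prop :=
  ∃ (k l : ℕ) (A : Matrix (Fin k) (Fin l) (ZMod 2)) (r : Fin k),
    EvenCycleRep A r ∧ M.IsoTo (colMatroid A)

/-- Every column of `A` has at most two nonzero entries. -/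
def GraphicRep {m n : Type*} (A : Matrix m n (ZMod 2)) : Prop :=
  ∀ j : n, ({i : m | A i j ≠ 0}).ncard ≤ 2

/-- A graphic matroid: one isomorphic to the column matroid of a `GF(2)` matrix in which
every column has at most two nonzero entries. -/
def Matroid.IsGraphic {α : Type*} (M : Matroid α) : Prop :=
  ∃ (k l : ℕ) (A : Matrix (Fin k) (Fin l) (ZMod 2)),
    GraphicRep A ∧ M.IsoTo (colMatroid A)

/-- A cographic matroid: the dual of a graphic matroid. -/
def Matroid.IsCographic {α : Type*} (M : Matroid α) : Prop := M✶.IsGraphic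

/-- An even-cut matroid: one isomorphic to the column matroid of a `GF(2)` matrix `A` having a
row `r` such that the column matroid of the matrix obtained by deleting row `r` is cographic. -/
def Matroid.IsEvenCut {α : Type*} (M : Matroid α) : Prop :=
  ∃ (k l : ℕ) (A : Matrix (Fin k) (Fin l) (ZMod 2)) (r : Fin k),
    (colMatroid (A.submatrix (Subtype.val : {i : Fin k // i ≠ r} → Fin k) id)).IsCographic ∧
    M.IsoTo (colMatroid A)

/-- `r₁, r₂` are rows of `A` such that every column of `A` either has at most one nonzero entry
outside rows `r₁, r₂`, or has exactly two nonzero entries outside rows `r₁, r₂` and is zero in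
both rows `r₁` and `r₂`. -/
def BlockingPairRep {m n : Type*} (A : Matrix m n (ZMod 2)) (r₁ r₂ : m) : Prop :=
  ∀ j : n, ({i : m | i ≠ r₁ ∧ i ≠ r₂ ∧ A i j ≠ 0}).ncard ≤ 1 ∨
    (({i : m | i ≠ r₁ ∧ i ≠ r₂ ∧ A i j ≠ 0}).ncard = 2 ∧ A r₁ j = 0 ∧ A r₂ j = 0)

/-- An even-cycle matroid with a blocking pair. -/
def Matroid.IsEvenCycleBP {α : Type*} (M : Matroid α) : Prop :=
  ∃ (k l : ℕ) (A : Matrix (Fin k) (Fin l) (ZMod 2)) (r₁ r₂ : Fin k), r₁ ≠ r₂ ∧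
    BlockingPairRep A r₁ r₂ ∧ M.IsoTo (colMatroid A)

/-- `N` is an excluded minor for the class of matroids satisfying `P`. -/
def IsExcludedMinorFor {α : Type*} (N : Matroid α) (P : Matroid α → Prop) : Prop :=
  ¬ P N ∧ ∀ e ∈ N.E, P (N.del {e}) ∧ P (N.con {e})

/-- The points of the binary projective space `PG(3,2)`: nonzero vectors of `GF(2)^4`. -/
abbrev PGIdx : Type := {v : Fin 4 → ZMod 2 // v ≠ 0}

/-- The matrix whose columns are the 15 nonzero vectors of `GF(2)^4`. -/
def PGMatrix : Matrix (Fin 4) PGIdx (ZMod 2) := fun i v => v.1 i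

/-- The binary projective geometry `PG(3,2)`. -/
def PG32 : Matroid PGIdx := colMatroid PGMatrix

/-- The vertex-edge incidence matrix of a simple graph on vertex set `V` whose edges are a
set of pairs `(u, w)` with `u < w`. -/
def incMatrix {k : ℕ} (E : Type*) (val : E → Fin k × Fin k) :
    Matrix (Fin k) E (ZMod 2) :=
  fun i e => if i = (val e).1 ∨ i = (val e).2 then 1 else 0

/-- Edges of `K7` minus two adjacent edges. -/
abbrev L19Edge : Type := {p : Fin 7 × Fin 7 // p.1 < p.2 ∧ p ≠ (0, 1) ∧ p ≠ (0, 2)}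

/-- `L19`: the dual of the cycle matroid of `K7` minus two adjacent edges. -/
def L19 : Matroid L19Edge := (colMatroid (incMatrix L19Edge Subtype.val))✶

/-- The matroid `L11`. -/
def L11 : Matroid (Fin 11) :=
  colMatroid (!![1,0,0,0,0,0,1,0,1,0,1;
                 0,1,0,0,0,0,1,0,0,1,1;
                 0,0,1,0,0,0,0,1,1,1,0;
                 0,0,0,1,0,0,0,1,1,0,1;
                 0,0,0,0,1,0,0,1,0,1,1;
                 0,0,0,0,0,1,0,0,1,1,1] : Matrix (Fin 6) (Fin 11) (ZMod 2))

/-- Edges of the complete graph `K6`. -/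
abbrev K6Edge : Type := {p : Fin 6 × Fin 6 // p.1 < p.2}

/-- The cycle matroid `M(K6)`. -/
def MK6 : Matroid K6Edge := colMatroid (incMatrix K6Edge Subtype.val)

/-- Edges of `K6` minus an edge. -/
abbrev K6eEdge : Type := {p : Fin 6 × Fin 6 // p.1 < p.2 ∧ p ≠ (0, 1)}

/-- The cycle matroid `M(K6 \ e)`. -/
def MK6e : Matroid K6eEdge := colMatroid (incMatrix K6eEdge Subtype.val)

/-- Edges of the complete graph `K5`. -/
abbrev K5Edge : Type := {p : Fin 5 × Fin 5 // p.1 < p.2}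

/-- The cycle matroid `M(K5)`. -/
def MK5 : Matroid K5Edge := colMatroid (incMatrix K5Edge Subtype.val)

/-- The matroid `H12`. -/
def H12 : Matroid (Fin 12) :=
  colMatroid (!![1,0,1,0,1,0,1,0,1,0,1,0;
                 0,0,0,0,1,1,1,1,0,0,0,0;
                 0,0,0,0,1,1,0,0,1,1,0,0;
                 1,1,0,0,0,0,0,0,0,0,1,1;
                 0,0,1,1,0,0,1,1,0,0,1,1] : Matrix (Fin 5) (Fin 12) (ZMod 2))

end
section AuxProof

open Module Submodule

private lemma zmod2_cases : ∀ x : ZMod 2, x = 0 ∨ x = 1 := by decide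

private lemma zmod2_add_self : ∀ x : ZMod 2, x + x = 0 := by decide

private lemma zmod2_add_eq_zero : ∀ x y : ZMod 2, x + y = 0 → x = y := by decide

/-- The linear map zeroing out coordinate `r0`. -/
private def zeroRow {k : ℕ} (r0 : Fin k) :
    (Fin k → ZMod 2) →ₗ[ZMod 2] (Fin k → ZMod 2) where
  toFun v := fun i => if i = r0 then 0 else v i
  map_add' v w := by funext i; by_cases h : i = r0 <;> simp [h]
  map_smul' c v := by funext i; by_cases h : i = r0 <;> simp [h]

private lemma zeroRow_apply {k : ℕ} (r0 : Fin k) (v : Fin k → ZMod 2) (i : Fin k) :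
    zeroRow r0 v i = if i = r0 then 0 else v i := rfl

private lemma finrank_span_le_ncard {K V : Type*} [Field K] [AddCommGroup V] [Module K V]
    (s : Set V) (hs : s.Finite) :
    Module.finrank K (Submodule.span K s) ≤ s.ncard := by
  haveI := hs.fintype
  rw [Set.ncard_eq_toFinset_card']
  rw [Set.toFinset_card]
  have := finrank_span_le_card (R := K) s
  rwa [Set.toFinset_card] at this

/-- A set of nonzero vectors of weight at most 2 spanning a space of dimension at most `d`
has at most `d(d+1)/2` elements. -/
private lemma weight2_card (k : ℕ) : ∀ (d : ℕ) (S : Set (Fin k → ZMod 2)),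
    (∀ v ∈ S, v ≠ 0) → (∀ v ∈ S, ({i | v i ≠ 0}).ncard ≤ 2) →
    Module.finrank (ZMod 2) (Submodule.span (ZMod 2) S) ≤ d →
    S.ncard * 2 ≤ d * (d + 1) := by
  intro d
  induction d with
  | zero =>
    intro S h0 _ hd
    have hS : S = ∅ := by
      ext v
      simp only [Set.mem_empty_iff_false, iff_false]
      intro hv
      have hbot : Submodule.span (ZMod 2) S = ⊥ :=
        Submodule.finrank_eq_zero.mp (Nat.le_zero.mp hd)
      have : v ∈ (⊥ : Submodule (ZMod 2) (Fin k → ZMod 2)) := hbot ▸ Submodule.subset_span hv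
      exact h0 v hv (by simpa using this)
    simp [hS]
  | succ d ih =>
    intro S h0 hw hd
    rcases Set.eq_empty_or_nonempty S with rfl | ⟨v, hv⟩
    · simp
    obtain ⟨a, hva⟩ : ∃ a, v a ≠ 0 := by
      by_contra h
      push_neg at h
      exact h0 v hv (funext h)
    classical
    set Sa : Set (Fin k → ZMod 2) := {w ∈ S | w a ≠ 0} with hSa_def
    set S0 : Set (Fin k → ZMod 2) := {w ∈ S | w a = 0} with hS0_def
    have hfin : S.Finite := Set.toFinite S
    have hunion : S = Sa ∪ S0 := by
      ext w
      by_cases h : w a = 0 <;> simp [hSa_def, hS0_def, h]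
    have hdisj : Disjoint Sa S0 := by
      rw [Set.disjoint_left]
      rintro w ⟨_, h1⟩ ⟨_, h2⟩
      exact h1 h2
    have hcard : S.ncard = Sa.ncard + S0.ncard := by
      rw [hunion]
      exact Set.ncard_union_eq hdisj (hfin.subset (hunion ▸ Set.subset_union_left))
        (hfin.subset (hunion ▸ Set.subset_union_right))
    -- bound S0 by induction
    have hS0span : Submodule.span (ZMod 2) S0 < Submodule.span (ZMod 2) S := by
      refine lt_of_le_of_ne (Submodule.span_mono fun w hw => hw.1) fun heq => ?_
      have hker : Submodule.span (ZMod 2) S0 ≤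
          LinearMap.ker (LinearMap.proj (R := ZMod 2) (φ := fun _ : Fin k => ZMod 2) a) :=
        Submodule.span_le.2 fun w hw => hw.2
      have hvmem : v ∈ Submodule.span (ZMod 2) S0 := heq ▸ Submodule.subset_span hv
      exact hva (hker hvmem)
    have hltrank := Submodule.finrank_lt_finrank_of_lt (K := ZMod 2) hS0span
    have hb0 : S0.ncard * 2 ≤ d * (d + 1) :=
      ih S0 (fun u hu => h0 u hu.1) (fun u hu => hw u hu.1) (by omega)
    -- bound Sa by linear independence
    have hkey : ∀ w : ↥Sa, ∀ c : Fin k, c ≠ a → (w : Fin k → ZMod 2) c ≠ 0 →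
        ∀ i, (w : Fin k → ZMod 2) i = if i = a ∨ i = c then 1 else 0 := by
      rintro w c hca hwc i
      have hsub : ({a, c} : Set (Fin k)) ⊆ {i | (w : Fin k → ZMod 2) i ≠ 0} := by
        rintro j (rfl | rfl)
        · exact w.2.2
        · exact hwc
      have heq : ({a, c} : Set (Fin k)) = {i | (w : Fin k → ZMod 2) i ≠ 0} := by
        refine Set.eq_of_subset_of_ncard_le hsub ?_ (Set.toFinite _)
        rw [Set.ncard_pair (Ne.symm hca)]
        exact hw _ w.2.1
      by_cases hi : i = a ∨ i = c
      · have : i ∈ {i | (w : Fin k → ZMod 2) i ≠ 0} := heq ▸ (by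
          rcases hi with rfl | rfl
          · exact Set.mem_insert _ _
          · exact Set.mem_insert_of_mem _ rfl)
        simp only [hi, if_true]
        exact (zmod2_cases _).resolve_left this
      · rw [if_neg hi]
        by_contra hne
        have hmem : i ∈ ({a, c} : Set (Fin k)) := by rw [heq]; exact hne
        simp only [Set.mem_insert_iff, Set.mem_singleton_iff] at hmem
        exact hi hmem
    have hli : LinearIndependent (ZMod 2) (fun w : ↥Sa => (w : Fin k → ZMod 2)) := by
      rw [linearIndependent_iff']
      intro s g hsum w0 hw0
      by_contra hg
      have hg1 : g w0 = 1 := (zmod2_cases (g w0)).resolve_left hg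
      set t := s.filter (fun w => g w ≠ 0) with ht
      have hsum' : (∑ w ∈ t, (w : Fin k → ZMod 2)) = 0 := by
        rw [← hsum, ht, Finset.sum_filter]
        refine Finset.sum_congr rfl fun w _ => ?_
        rcases zmod2_cases (g w) with h | h <;> simp [h]
      have hw0t : w0 ∈ t := Finset.mem_filter.2 ⟨hw0, by simp [hg1]⟩
      have hta : ∀ w : ↥Sa, (w : Fin k → ZMod 2) a = 1 :=
        fun w => (zmod2_cases _).resolve_left w.2.2
      by_cases hex : ∃ w ∈ t, ∃ c, c ≠ a ∧ (w : Fin k → ZMod 2) c ≠ 0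
      · obtain ⟨w, hwt, c, hca, hwc⟩ := hex
        have h1 : (∑ u ∈ t, (u : Fin k → ZMod 2) c) = 0 := by
          have := congrFun hsum' c
          simpa using this
        have h2 : (∑ u ∈ t, (u : Fin k → ZMod 2) c) = (w : Fin k → ZMod 2) c := by
          refine Finset.sum_eq_single_of_mem w hwt fun u _ hune => ?_
          by_contra huc
          refine hune (Subtype.ext (funext fun i => ?_))
          rw [hkey u c hca huc i, hkey w c hca hwc i]
        exact hwc (h2 ▸ h1)
      · push_neg at hex
        have hall : ∀ w ∈ t, (w : Fin k → ZMod 2) = Pi.single a 1 := by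
          intro w hwt
          funext i
          by_cases hi : i = a
          · subst hi; rw [hta w]; simp
          · rw [hex w hwt i hi, Pi.single_eq_of_ne hi]
        have hteq : t = {w0} := by
          refine Finset.eq_singleton_iff_unique_mem.2 ⟨hw0t, fun w hwt => ?_⟩
          exact Subtype.ext ((hall w hwt).trans (hall w0 hw0t).symm)
        have hcontr : (1 : ZMod 2) = 0 := by
          have := congrFun hsum' a
          rw [hteq] at this
          simpa [hta w0] using this
        exact one_ne_zero hcontr
    haveI : Fintype ↥Sa := Fintype.ofFinite _
    have hSale : Sa.ncard ≤ d + 1 := by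
      have hli' : LinearIndependent (ZMod 2)
          (fun w : ↥Sa => (⟨(w : Fin k → ZMod 2), Submodule.subset_span w.2.1⟩ :
            ↥(Submodule.span (ZMod 2) S))) := by
        apply LinearIndependent.of_comp (Submodule.span (ZMod 2) S).subtype
        exact hli
      have := hli'.fintype_card_le_finrank
      rw [Set.ncard_eq_toFinset_card', Set.toFinset_card]
      omega
    calc S.ncard * 2 = Sa.ncard * 2 + S0.ncard * 2 := by omega
    _ ≤ (d + 1) * 2 + d * (d + 1) := by omega
    _ = (d + 1) * (d + 1 + 1) := by ring

private lemma arith_eq (r : ℕ) : r ^ 2 - r + 1 = (r - 1) * r + 1 := by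
  cases r with
  | zero => rfl
  | succ m =>
    have h : (m + 1) ^ 2 = m * (m + 1) + (m + 1) := by ring
    rw [h, Nat.add_sub_cancel]
    simp

/-- Central counting lemma: a set of nonzero vectors, each with at most two nonzero
entries outside row `r0`, spanning a space of dimension at most `r`, has at most
`r^2 - r + 1` elements. -/
private lemma evenCycle_count {k : ℕ} (r0 : Fin k) (S : Set (Fin k → ZMod 2)) (r : ℕ)
    (h0 : ∀ v ∈ S, v ≠ 0)
    (hw : ∀ v ∈ S, ({i : Fin k | i ≠ r0 ∧ v i ≠ 0}).ncard ≤ 2)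
    (hd : Module.finrank (ZMod 2) (Submodule.span (ZMod 2) S) ≤ r) :
    S.ncard ≤ r ^ 2 - r + 1 := by
  classical
  set π := zeroRow r0 with hπ
  set e0 : Fin k → ZMod 2 := Pi.single r0 1 with he0def
  have hπapp : ∀ (v : Fin k → ZMod 2) (i : Fin k), π v i = if i = r0 then 0 else v i :=
    fun v i => rfl
  have he0r0 : e0 r0 = 1 := Pi.single_eq_same r0 1
  have he0ne : e0 ≠ 0 := fun h => one_ne_zero (by rw [← he0r0, h]; rfl)
  -- support of π v
  have hsupp : ∀ v : Fin k → ZMod 2, {i : Fin k | π v i ≠ 0} = {i | i ≠ r0 ∧ v i ≠ 0} := by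
    intro v
    ext i
    by_cases h : i = r0 <;> simp [hπapp, h]
  have hπzero : ∀ v : Fin k → ZMod 2, π v = 0 → ∀ i, i ≠ r0 → v i = 0 := by
    intro v h i hi
    have := congrFun h i
    rwa [hπapp, if_neg hi] at this
  have hπzero' : ∀ v : Fin k → ZMod 2, v ≠ 0 → π v = 0 → v = e0 := by
    intro v hvne h
    funext i
    by_cases hi : i = r0
    · rw [hi, he0r0]
      rcases zmod2_cases (v r0) with h' | h'
      · exact absurd (funext fun j => by
          by_cases hj : j = r0
          · rw [hj]; exact h'
          · exact hπzero v h j hj) hvne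
      · exact h'
    · rw [hπzero v h i hi, he0def, Pi.single_eq_of_ne hi]
  -- weight/nonzero facts of image minus zero
  have himgw : ∀ u ∈ π '' S \ {0}, ({i : Fin k | u i ≠ 0}).ncard ≤ 2 := by
    rintro u ⟨⟨v, hv, rfl⟩, _⟩
    rw [hsupp v]
    exact hw v hv
  have hspanimg : Submodule.span (ZMod 2) (π '' S) = Submodule.map π (Submodule.span (ZMod 2) S) :=
    Submodule.span_image π
  by_cases he0 : e0 ∈ Submodule.span (ZMod 2) S
  · -- case A : e0 in the span
    -- rank of the image is at most r - 1
    have hrk : Module.finrank (ZMod 2) (Submodule.map π (Submodule.span (ZMod 2) S)) + 1 ≤ r := by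
      set W := Submodule.span (ZMod 2) S with hW
      have hfr := LinearMap.finrank_range_add_finrank_ker (π.comp W.subtype)
      have hrange : LinearMap.range (π.comp W.subtype) = Submodule.map π W := by
        rw [LinearMap.range_comp, Submodule.range_subtype]
      have hkerpos : 0 < Module.finrank (ZMod 2) (LinearMap.ker (π.comp W.subtype)) := by
        rw [Module.finrank_pos_iff_exists_ne_zero]
        refine ⟨⟨⟨e0, he0⟩, ?_⟩, ?_⟩
        · rw [LinearMap.mem_ker]
          show π e0 = 0
          funext i
          rw [hπapp]
          by_cases hi : i = r0
          · simp [hi]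
          · simp [hi, he0def, Pi.single_eq_of_ne hi]
        · intro h
          apply he0ne
          have h1 : (⟨e0, he0⟩ : ↥W) = 0 := by simpa using congrArg Subtype.val h
          simpa using congrArg Subtype.val h1
      rw [hrange] at hfr
      have hWle : Module.finrank (ZMod 2) W ≤ r := hd
      omega
    set T := π '' S \ {0} with hT
    have hTrank : Module.finrank (ZMod 2) (Submodule.span (ZMod 2) T) ≤ r - 1 := by
      have h1 : Submodule.span (ZMod 2) T ≤ Submodule.span (ZMod 2) (π '' S) :=
        Submodule.span_mono Set.diff_subset
      have h2 := Submodule.finrank_mono h1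
      rw [hspanimg] at h2
      omega
    have hTcard : T.ncard * 2 ≤ (r - 1) * (r - 1 + 1) :=
      weight2_card k (r - 1) T (fun u hu => hu.2) himgw hTrank
    -- decompose S
    set Sk : Set (Fin k → ZMod 2) := {v ∈ S | π v = 0} with hSk
    set S1 : Set (Fin k → ZMod 2) := {v ∈ S | π v ≠ 0 ∧ v r0 = 0} with hS1
    set S2 : Set (Fin k → ZMod 2) := {v ∈ S | π v ≠ 0 ∧ v r0 = 1} with hS2
    have hcover : S = Sk ∪ (S1 ∪ S2) := by
      ext w
      simp only [hSk, hS1, hS2, Set.mem_union, Set.mem_setOf_eq]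
      constructor
      · intro hwS
        by_cases h : π w = 0
        · exact Or.inl ⟨hwS, h⟩
        · rcases zmod2_cases (w r0) with h' | h'
          · exact Or.inr (Or.inl ⟨hwS, h, h'⟩)
          · exact Or.inr (Or.inr ⟨hwS, h, h'⟩)
      · rintro (h | h | h) <;> exact h.1
    have hSkcard : Sk.ncard ≤ 1 := by
      have : Sk ⊆ {e0} := fun v hv => hπzero' v (h0 v hv.1) hv.2
      calc Sk.ncard ≤ ({e0} : Set _).ncard := Set.ncard_le_ncard this (Set.finite_singleton _)
      _ = 1 := Set.ncard_singleton _
    have hS1card : S1.ncard ≤ T.ncard := by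
      have hinj : Set.InjOn π S1 := by
        intro x hx y hy hxy
        funext i
        by_cases hi : i = r0
        · rw [hi, hx.2.2, hy.2.2]
        · have := congrFun hxy i
          rwa [hπapp, hπapp, if_neg hi, if_neg hi] at this
      rw [← Set.ncard_image_of_injOn hinj]
      refine Set.ncard_le_ncard ?_ (Set.toFinite _)
      rintro _ ⟨v, hv, rfl⟩
      exact ⟨⟨v, hv.1, rfl⟩, hv.2.1⟩
    have hS2card : S2.ncard ≤ T.ncard := by
      have hinj : Set.InjOn π S2 := by
        intro x hx y hy hxy
        funext i
        by_cases hi : i = r0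
        · rw [hi, hx.2.2, hy.2.2]
        · have := congrFun hxy i
          rwa [hπapp, hπapp, if_neg hi, if_neg hi] at this
      rw [← Set.ncard_image_of_injOn hinj]
      refine Set.ncard_le_ncard ?_ (Set.toFinite _)
      rintro _ ⟨v, hv, rfl⟩
      exact ⟨⟨v, hv.1, rfl⟩, hv.2.1⟩
    have hStot : S.ncard ≤ Sk.ncard + (S1.ncard + S2.ncard) := by
      rw [hcover]
      calc (Sk ∪ (S1 ∪ S2)).ncard ≤ Sk.ncard + (S1 ∪ S2).ncard := Set.ncard_union_le _ _
      _ ≤ Sk.ncard + (S1.ncard + S2.ncard) := by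
          have := Set.ncard_union_le S1 S2
          omega
    rw [arith_eq]
    have harith : (r - 1) * (r - 1 + 1) ≤ (r - 1) * r := by
      apply Nat.mul_le_mul_left
      omega
    have : S.ncard ≤ 1 + 2 * T.ncard := by omega
    have h2T : 2 * T.ncard ≤ (r - 1) * r := by omega
    omega
  · -- case B : e0 not in the span; π is injective on S
    have hinj : Set.InjOn π S := by
      intro x hx y hy hxy
      by_contra hne
      have hmem : x + y ∈ Submodule.span (ZMod 2) S :=
        Submodule.add_mem _ (Submodule.subset_span hx) (Submodule.subset_span hy)
      have hne0 : x + y ≠ 0 := by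
        intro h
        apply hne
        funext i
        exact zmod2_add_eq_zero _ _ (congrFun h i)
      have hπ0 : π (x + y) = 0 := by
        rw [map_add, hxy]
        funext i
        exact zmod2_add_self _
      rw [hπzero' _ hne0 hπ0] at hmem
      exact he0 hmem
    have h0img : ∀ u ∈ π '' S, u ≠ 0 := by
      rintro _ ⟨v, hv, rfl⟩ h
      exact he0 ((hπzero' v (h0 v hv) h) ▸ Submodule.subset_span hv)
    have himgw' : ∀ u ∈ π '' S, ({i : Fin k | u i ≠ 0}).ncard ≤ 2 := by
      rintro _ ⟨v, hv, rfl⟩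
      rw [hsupp v]
      exact hw v hv
    have hrk : Module.finrank (ZMod 2) (Submodule.span (ZMod 2) (π '' S)) ≤ r := by
      rw [hspanimg]
      exact le_trans (Submodule.finrank_map_le _ _) hd
    have hbound := weight2_card k r (π '' S) h0img himgw' hrk
    rw [← Set.ncard_image_of_injOn hinj]
    rw [arith_eq]
    -- from (π '' S).ncard * 2 ≤ r * (r + 1) derive the bound
    cases r with
    | zero => omega
    | succ m =>
      have h1 : (m + 1) * (m + 1 + 1) = m * m + 3 * m + 2 := by ring
      have h2 : (m + 1 - 1) * (m + 1) + 1 = m * m + m + 1 := by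
        simp only [Nat.add_sub_cancel]
        ring
      rw [h2]
      rw [h1] at hbound
      have hm : m ≤ m * m := by
        rcases Nat.eq_zero_or_pos m with rfl | h
        · simp
        · exact Nat.le_mul_of_pos_left m h
      linarith

end AuxProof

/-- Every simple even-cycle matroid of rank `r` has at most `r^2 - r + 1` elements. -/
theorem evenCycle_simple_card_le {α : Type*} (M : Matroid α) (r : ℕ)
    (hec : M.IsEvenCycle) (hs : M.IsSimple') (hr : ∃ B, M.IsBase B ∧ B.ncard = r) :
    M.E.ncard ≤ r ^ 2 - r + 1 := by
  classical
  obtain ⟨k, l, A, r0, hrep, φ, hbij, hiff⟩ := hec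
  obtain ⟨B, hB, hBcard⟩ := hr
  have hBsub : B ⊆ M.E := hB.subset_ground
  have hEfin : M.E.Finite := by
    have himg : φ '' M.E = (colMatroid A).E := hbij.image_eq
    exact Set.Finite.of_finite_image (himg ▸ Set.toFinite _) hbij.injOn
  have hBfin : B.Finite := hEfin.subset hBsub
  have hindep : ∀ I : Set (Fin l),
      (colMatroid A).Indep I ↔ LinearIndependent (ZMod 2) (fun i : I => A.transpose i) :=
    fun I => Iff.rfl
  set cvec : Fin l → (Fin k → ZMod 2) := fun j => A.transpose j with hcvec
  have hnz : ∀ e ∈ M.E, cvec (φ e) ≠ 0 := by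
    intro e he
    have h1 : M.Indep {e} := by
      have := hs e he e he
      rwa [Set.pair_eq_singleton] at this
    have h2 := (hiff {e} (Set.singleton_subset_iff.2 he)).1 h1
    rw [Set.image_singleton, hindep] at h2
    exact h2.ne_zero ⟨φ e, rfl⟩
  have hinjcol : Set.InjOn cvec (φ '' M.E) := by
    rintro _ ⟨e, he, rfl⟩ _ ⟨f, hf, rfl⟩ hAeq
    by_contra hne
    have hsubEF : ({e, f} : Set α) ⊆ M.E := by
      rintro x (rfl | rfl)
      · exact he
      · exact hf
    have hp := (hiff {e, f} hsubEF).1 (hs e he f hf)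
    rw [Set.image_pair, hindep] at hp
    have := hp.injective (a₁ := ⟨φ e, Set.mem_insert _ _⟩)
      (a₂ := ⟨φ f, Set.mem_insert_of_mem _ rfl⟩) hAeq
    exact hne (congrArg Subtype.val this)
  set Vcols : Set (Fin k → ZMod 2) := cvec '' (φ '' M.E) with hVcols
  have hEcard : M.E.ncard = Vcols.ncard := by
    rw [hVcols, Set.ncard_image_of_injOn hinjcol, Set.ncard_image_of_injOn hbij.injOn]
  have hWB : Vcols ⊆ ↑(Submodule.span (ZMod 2) (cvec '' (φ '' B))) := by
    rintro _ ⟨_, ⟨e, he, rfl⟩, rfl⟩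
    by_cases heB : e ∈ B
    · exact Submodule.subset_span ⟨φ e, ⟨e, heB, rfl⟩, rfl⟩
    · by_contra hns
      have hφeB : φ e ∉ φ '' B := by
        rintro ⟨b, hbB, hbe⟩
        exact heB (hbij.injOn (hBsub hbB) he hbe ▸ hbB)
      have hli : LinearIndependent (ZMod 2) (fun i : ↥(φ '' B) => cvec i) := by
        rw [hcvec, ← hindep]
        exact (hiff B hBsub).1 hB.indep
      have hins : LinearIndependent (ZMod 2) (fun i : ↥(insert (φ e) (φ '' B)) => cvec i) :=
        (linearIndepOn_insert hφeB).2 ⟨hli, fun hmem => hns (by simpa using hmem)⟩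
      have hMi : M.Indep (insert e B) := by
        refine (hiff _ (Set.insert_subset he hBsub)).2 ?_
        rw [Set.image_insert_eq, hindep]
        exact hins
      have := hB.eq_of_subset_indep hMi (Set.subset_insert e B)
      exact heB (this ▸ Set.mem_insert e B)
  have hfr : Module.finrank (ZMod 2) (Submodule.span (ZMod 2) Vcols) ≤ r := by
    have h1 : Submodule.span (ZMod 2) Vcols ≤ Submodule.span (ZMod 2) (cvec '' (φ '' B)) :=
      Submodule.span_le.2 hWB
    have h2 := finrank_span_le_ncard (K := ZMod 2) (cvec '' (φ '' B)) (Set.toFinite _)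
    have h3 : (cvec '' (φ '' B)).ncard ≤ r := by
      calc (cvec '' (φ '' B)).ncard ≤ (φ '' B).ncard := Set.ncard_image_le (Set.toFinite _)
        _ ≤ B.ncard := Set.ncard_image_le hBfin
        _ = r := hBcard
    exact le_trans (Submodule.finrank_mono h1) (le_trans h2 h3)
  rw [hEcard]
  refine evenCycle_count r0 Vcols r ?_ ?_ hfr
  · rintro _ ⟨_, ⟨e, he, rfl⟩, rfl⟩
    exact hnz e he
  · rintro _ ⟨_, ⟨e, he, rfl⟩, rfl⟩
    exact hrep (φ e)
end

section
/- Let M be an even-cycle matroid with a blocking pair, and let N be a binary matroid on ground set E(M) together with one new element e such that N/e = M. If e is a coloop of N, or if {e, f} is a series pair of N (a 2-element cocircuit) for some element f, then N is an even-cycle matroid with a blocking pair. -/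
open Set Matroid

noncomputable section CoextAux
open Classical

variable {k l : ℕ}

/-- Extension-by-zero as a linear map. -/
def Elm (k : ℕ) : (Fin k → ZMod 2) →ₗ[ZMod 2] (Fin (k+1) → ZMod 2) where
  toFun x := Fin.snoc x 0
  map_add' x y := by
    funext i
    refine Fin.lastCases ?_ (fun i => ?_) i <;> simp
  map_smul' c x := by
    funext i
    refine Fin.lastCases ?_ (fun i => ?_) i <;> simp

@[simp] lemma Elm_last (x : Fin k → ZMod 2) : Elm k x (Fin.last k) = 0 := by simp [Elm]
@[simp] lemma Elm_castSucc (x : Fin k → ZMod 2) (i : Fin k) :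
    Elm k x (Fin.castSucc i) = x i := by simp [Elm]

lemma Elm_ker : LinearMap.ker (Elm k) = ⊥ := by
  rw [LinearMap.ker_eq_bot]
  intro x y h
  funext i
  have := congrFun h (Fin.castSucc i)
  simpa using this

lemma key_indep {ι : Type} [Finite ι] (x : ι → Fin k → ZMod 2) (y : Fin (k+1) → ZMod 2)
    (hy : y (Fin.last k) ≠ 0) :
    LinearIndependent (ZMod 2) (Sum.elim (fun i => Elm k (x i)) (fun _ : PUnit => y)) ↔
      LinearIndependent (ZMod 2) x := by
  constructor
  · intro h
    refine LinearIndependent.of_comp (Elm k) ?_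
    have := h.comp Sum.inl Sum.inl_injective
    simpa [Function.comp_def] using this
  · intro h
    rw [linearIndependent_sum]
    refine ⟨by simpa [Function.comp_def] using h.map' _ Elm_ker, ?_, ?_⟩
    · refine linearIndependent_unique_iff.mpr ?_
      intro h0
      exact hy (by rw [show y = 0 from h0]; rfl)
    · rw [Submodule.disjoint_def]
      intro w hw1 hw2
      have hwlast : w (Fin.last k) = 0 := by
        have hle : Submodule.span (ZMod 2)
            (Set.range (Sum.elim (fun i => Elm k (x i)) (fun _ : PUnit => y) ∘ Sum.inl)) ≤
            LinearMap.ker (LinearMap.proj (R := ZMod 2)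
              (φ := fun _ : Fin (k+1) => ZMod 2) (Fin.last k)) := by
          rw [Submodule.span_le]
          rintro _ ⟨i, rfl⟩
          simp
        simpa using hle hw1
      have hr : Set.range ((Sum.elim (fun i => Elm k (x i)) fun _ : PUnit => y) ∘ Sum.inr)
          = {y} := by
        rw [Sum.elim_comp_inr, Set.range_const]
      rw [hr, Submodule.mem_span_singleton] at hw2
      obtain ⟨c, rfl⟩ := hw2
      have hc : c = 0 := by
        have : c * y (Fin.last k) = 0 := by simpa using hwlast
        rcases mul_eq_zero.1 this with h0 | h0
        · exact h0
        · exact absurd h0 hy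
      rw [hc, zero_smul]
def zeta (z : Fin k → ZMod 2) : Fin (k+1) → ZMod 2 := Fin.snoc z 1

@[simp] lemma zeta_last (z : Fin k → ZMod 2) : zeta z (Fin.last k) = 1 := by simp [zeta]
@[simp] lemma zeta_castSucc (z : Fin k → ZMod 2) (i : Fin k) :
    zeta z (Fin.castSucc i) = z i := by simp [zeta]

def extCols (v : Fin l → Fin k → ZMod 2) (z : Fin k → ZMod 2) (ρ : Fin l → ZMod 2) :
    Fin (l+1) → Fin (k+1) → ZMod 2 :=
  Fin.snoc (fun j => Elm k (v j) + ρ j • zeta z) (zeta z)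

@[simp] lemma extCols_last (v : Fin l → Fin k → ZMod 2) (z : Fin k → ZMod 2)
    (ρ : Fin l → ZMod 2) :
    extCols v z ρ (Fin.last l) = zeta z := by simp [extCols]

@[simp] lemma extCols_castSucc (v : Fin l → Fin k → ZMod 2) (z : Fin k → ZMod 2)
    (ρ : Fin l → ZMod 2) (j : Fin l) :
    extCols v z ρ (Fin.castSucc j) = Elm k (v j) + ρ j • zeta z := by
  simp [extCols]

lemma extCols_castSucc_eq_snoc (v : Fin l → Fin k → ZMod 2) (z : Fin k → ZMod 2)
    (ρ : Fin l → ZMod 2) (j : Fin l) :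
    extCols v z ρ (Fin.castSucc j) = Fin.snoc (fun i => v j i + ρ j * z i) (ρ j) := by
  rw [extCols_castSucc]
  funext i
  refine Fin.lastCases ?_ (fun i => ?_) i <;> simp

lemma lin2 (v : Fin l → Fin k → ZMod 2) (z : Fin k → ZMod 2) (ρ : Fin l → ZMod 2)
    (hρ : ∀ j₁ j₂, ρ j₁ ≠ 0 → ρ j₂ ≠ 0 → j₁ = j₂) (J : Set (Fin l)) :
    LinearIndependent (ZMod 2) (fun x : ↥(Fin.castSucc '' J) => extCols v z ρ (x : Fin (l+1))) ↔
      LinearIndependent (ZMod 2) (fun x : ↥{j ∈ J | ρ j = 0} => v (x : Fin l)) := by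
  have hinj : Function.Injective (Fin.castSucc : Fin l → Fin (l+1)) :=
    Fin.castSucc_injective l
  rw [← linearIndependent_equiv' (Equiv.Set.image _ J hinj)
    (g := fun j : ↥J => extCols v z ρ (Fin.castSucc (j : Fin l))) (by funext j; simp)]
  by_cases hex : ∃ j₀ ∈ J, ρ j₀ ≠ 0
  · obtain ⟨j₀, hj₀J, hρ₀⟩ := hex
    have hset : {j ∈ J | ρ j = 0} = J \ {j₀} := by
      ext j
      simp only [mem_setOf_eq, mem_diff, mem_singleton_iff]
      constructor
      · rintro ⟨hj, h0⟩
        exact ⟨hj, fun h => hρ₀ (h ▸ h0)⟩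
      · rintro ⟨hj, hne⟩
        refine ⟨hj, ?_⟩
        by_contra h0
        exact hne (hρ j j₀ h0 hρ₀)
    rw [hset]
    have hJ : J = insert j₀ (J \ {j₀}) := by
      rw [Set.insert_diff_singleton, Set.insert_eq_self.2 hj₀J]
    have hnotmem : j₀ ∉ J \ {j₀} := fun h => h.2 rfl
    have heq : (fun j : ↥J => extCols v z ρ (Fin.castSucc (j : Fin l))) ∘
        ((Equiv.Set.insert hnotmem).symm.trans (Equiv.setCongr hJ.symm)) =
        Sum.elim (fun j : ↥(J \ {j₀}) => extCols v z ρ (Fin.castSucc (j : Fin l)))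
          (fun _ : PUnit => extCols v z ρ (Fin.castSucc j₀)) := by
      funext x
      rcases x with x | x <;> rfl
    rw [← linearIndependent_equiv'
      ((Equiv.Set.insert hnotmem).symm.trans (Equiv.setCongr hJ.symm)) heq]
    have h1 : (fun j : ↥(J \ {j₀}) => extCols v z ρ (Fin.castSucc (j : Fin l))) =
        fun j : ↥(J \ {j₀}) => Elm k (v (j : Fin l)) := by
      funext j
      have h0 : ρ (j : Fin l) = 0 := by
        by_contra h0
        exact j.2.2 (hρ _ _ h0 hρ₀)
      rw [extCols_castSucc, h0, zero_smul, add_zero]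
    rw [h1]
    have hy : extCols v z ρ (Fin.castSucc j₀) (Fin.last k) ≠ 0 := by
      rw [extCols_castSucc]
      simpa using hρ₀
    exact key_indep _ _ hy
  · push_neg at hex
    have hset : {j ∈ J | ρ j = 0} = J := by
      ext j; simp only [mem_setOf_eq, and_iff_left_iff_imp]
      intro hj
      exact hex j hj
    rw [hset]
    have h1 : (fun j : ↥J => extCols v z ρ (Fin.castSucc (j : Fin l))) =
        (Elm k) ∘ fun j : ↥J => v (j : Fin l) := by
      funext j
      rw [extCols_castSucc, hex _ j.2, zero_smul, add_zero]
      rfl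
    rw [h1]
    exact ⟨fun h => h.of_comp _, fun h => h.map' _ Elm_ker⟩

lemma lin1 (v : Fin l → Fin k → ZMod 2) (z : Fin k → ZMod 2) (ρ : Fin l → ZMod 2)
    (J : Set (Fin l)) :
    LinearIndependent (ZMod 2)
      (fun x : ↥(insert (Fin.last l) (Fin.castSucc '' J)) => extCols v z ρ (x : Fin (l+1))) ↔
      LinearIndependent (ZMod 2) (fun x : ↥J => v (x : Fin l)) := by
  have hinj : Function.Injective (Fin.castSucc : Fin l → Fin (l+1)) :=
    Fin.castSucc_injective l
  have hnotmem : Fin.last l ∉ Fin.castSucc '' J := by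
    rintro ⟨j, -, hj⟩
    exact (Fin.castSucc_lt_last j).ne hj
  set ζ : Fin (k+1) → ZMod 2 := zeta z with hζ
  have heq : (fun x : ↥(insert (Fin.last l) (Fin.castSucc '' J)) =>
        extCols v z ρ (x : Fin (l+1))) ∘
      ((Equiv.sumCongr (Equiv.Set.image _ J hinj) (Equiv.refl PUnit)).trans
        (Equiv.Set.insert hnotmem).symm) =
      Sum.elim (fun j : ↥J => Elm k (v (j : Fin l)) + ρ (j : Fin l) • ζ)
        (fun _ : PUnit => ζ) := by
    funext x
    rcases x with x | x
    · show extCols v z ρ (Fin.castSucc (x : Fin l)) = _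
      rw [extCols_castSucc]
      rfl
    · show extCols v z ρ (Fin.last l) = _
      rw [extCols_last]
      rfl
  rw [← linearIndependent_equiv' _ heq]
  haveI : Fintype ↥J := Set.Finite.fintype (Set.toFinite J)
  have hspan : Submodule.span (ZMod 2)
      (Set.range (Sum.elim (fun j : ↥J => Elm k (v (j : Fin l)) + ρ (j : Fin l) • ζ)
        (fun _ : PUnit => ζ))) = Submodule.span (ZMod 2)
      (Set.range (Sum.elim (fun j : ↥J => Elm k (v (j : Fin l))) (fun _ : PUnit => ζ))) := by
    apply le_antisymm <;> rw [Submodule.span_le] <;> rintro _ ⟨i, rfl⟩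
    · rcases i with j | u
      · exact Submodule.add_mem _ (Submodule.subset_span ⟨Sum.inl j, rfl⟩)
          (Submodule.smul_mem _ _ (Submodule.subset_span ⟨Sum.inr PUnit.unit, rfl⟩))
      · exact Submodule.subset_span ⟨Sum.inr PUnit.unit, rfl⟩
    · rcases i with j | u
      · have h2 : (Sum.elim (fun j : ↥J => Elm k (v (j : Fin l)))
            (fun _ : PUnit => ζ)) (Sum.inl j) =
            (Elm k (v (j : Fin l)) + ρ (j : Fin l) • ζ) - ρ (j : Fin l) • ζ := by
          simp
        rw [h2]
        exact Submodule.sub_mem _ (Submodule.subset_span ⟨Sum.inl j, rfl⟩)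
          (Submodule.smul_mem _ _ (Submodule.subset_span ⟨Sum.inr PUnit.unit, rfl⟩))
      · exact Submodule.subset_span ⟨Sum.inr PUnit.unit, rfl⟩
  have hfr : (Set.range (Sum.elim (fun j : ↥J => Elm k (v (j : Fin l)) + ρ (j : Fin l) • ζ)
        (fun _ : PUnit => ζ))).finrank (ZMod 2) =
      (Set.range (Sum.elim (fun j : ↥J => Elm k (v (j : Fin l)))
        (fun _ : PUnit => ζ))).finrank (ZMod 2) := by
    unfold Set.finrank
    rw [hspan]
  rw [linearIndependent_iff_card_eq_finrank_span, hfr,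
    ← linearIndependent_iff_card_eq_finrank_span]
  refine key_indep _ _ ?_
  rw [hζ]
  simp

lemma colMatroid_indep_iff {m n : Type*} [Fintype m] [Fintype n] (A : Matrix m n (ZMod 2))
    (I : Set n) : (colMatroid A).Indep I ↔
      LinearIndependent (ZMod 2) (fun i : I => A.transpose i) := by
  simp [colMatroid]

lemma colMatroid_ground {m n : Type*} [Fintype m] [Fintype n] (A : Matrix m n (ZMod 2)) :
    (colMatroid A).E = Set.univ := by
  simp [colMatroid]

lemma con_singleton_indep_iff {α : Type*} (N : Matroid α) {e : α} (he : N.Indep {e})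
    {J : Set α} (hJ : J ⊆ N.E \ {e}) :
    (N.con {e}).Indep J ↔ N.Indep (insert e J) := by
  have heE : e ∈ N.E := he.subset_ground rfl
  rw [Matroid.con, Matroid.del, dual_indep_iff_exists']
  constructor
  · rintro ⟨hJR, B₀, hB₀, hdisj⟩
    rw [isBase_restrict_iff'] at hB₀
    obtain ⟨B₁, hB₁, hB₀B₁⟩ := hB₀.indep.exists_isBase_superset
    have heB₁ : e ∉ B₁ := by
      intro heB₁
      obtain ⟨Bn, hBn, heBn⟩ := he.exists_isBase_superset
      have hB₂ := hBn.compl_isBase_dual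
      obtain ⟨y, hy, hyB⟩ := hB₁.exchange hB₂ ⟨heB₁, fun h => h.2 (heBn rfl)⟩
      have hyne : y ≠ e := fun h => hy.1.2 (h ▸ heBn rfl)
      have hsub2 : insert y B₀ ⊆ insert y (B₁ \ {e}) :=
        insert_subset_insert (subset_diff_singleton hB₀B₁ (fun h => (hB₀.subset h).2 rfl))
      have hind : N✶.Indep (insert y B₀) := hyB.indep.subset hsub2
      have hsub3 : insert y B₀ ⊆ N✶.E \ {e} :=
        insert_subset ⟨hy.1.1, hyne⟩ hB₀.subset
      have h4 := hB₀.eq_of_subset_indep hind (subset_insert _ _) hsub3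
      have h5 : y ∈ B₀ := by rw [h4]; exact mem_insert _ _
      exact hy.2 (hB₀B₁ h5)
    have hB₀B₁' : B₀ = B₁ := hB₀.eq_of_subset_indep hB₁.indep hB₀B₁
      (fun x hx => ⟨hB₁.subset_ground hx, fun hxe => heB₁ (hxe ▸ hx)⟩)
    have hBase : N.IsBase (N.E \ B₁) := hB₁.compl_isBase_of_dual
    refine hBase.indep.subset (insert_subset ⟨heE, heB₁⟩ fun x hx =>
      ⟨(hJ hx).1, fun hxB₁ => (Set.disjoint_left.mp hdisj hx (by rw [hB₀B₁']; exact hxB₁))⟩)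
  · intro hind
    obtain ⟨B, hB, hsub⟩ := hind.exists_isBase_superset
    have heB : e ∈ B := hsub (mem_insert _ _)
    refine ⟨fun x hx => ⟨(hJ hx).1, (hJ hx).2⟩, N.E \ B, ?_, ?_⟩
    · rw [isBase_restrict_iff']
      constructor
      · exact ⟨hB.compl_isBase_dual.indep, fun x hx => ⟨hx.1, fun hxe => hx.2 (hxe ▸ heB)⟩⟩
      · intro Y hY hBY
        exact ((hB.compl_isBase_dual.eq_of_subset_indep hY.1 hBY).symm).subset
    · exact disjoint_left.mpr fun x hx hxB => hxB.2 (hsub (mem_insert_of_mem _ hx))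

lemma swap_base {α : Type*} {N' : Matroid α} {e f : α} (hef : e ≠ f)
    (hdep : ¬ N'.Indep {e, f}) (hfi : N'.Indep {f}) {B : Set α}
    (hB : N'.IsBase B) (heB : e ∈ B) (hfB : f ∉ B) : N'.IsBase (insert f (B \ {e})) := by
  have hfE : f ∈ N'.E := hfi.subset_ground rfl
  have heE : e ∈ N'.E := hB.subset_ground heB
  have hei : N'.Indep {e} := hB.indep.subset (singleton_subset_iff.2 heB)
  have hecl : e ∈ N'.closure {f} := by
    by_contra h
    exact hdep ((hfi.insert_indep_iff).mpr (Or.inl ⟨heE, h⟩))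
  have hBe : N'.Indep (B \ {e}) := hB.indep.subset diff_subset
  have hfB' : f ∉ N'.closure (B \ {e}) := by
    intro hf
    have h1 : N'.closure {f} ⊆ N'.closure (B \ {e}) :=
      N'.closure_subset_closure_of_subset_closure (singleton_subset_iff.2 hf)
    exact hB.indep.notMem_closure_diff_of_mem heB (h1 hecl)
  have hind : N'.Indep (insert f (B \ {e})) :=
    (hBe.insert_indep_iff).mpr (Or.inl ⟨hfE, hfB'⟩)
  refine hind.isBase_of_ground_subset_closure ?_
  have hBsub : B ⊆ N'.closure (insert f (B \ {e})) := by
    intro x hx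
    by_cases hxe : x = e
    · subst hxe
      exact N'.closure_subset_closure (singleton_subset_iff.2 (mem_insert _ _)) hecl
    · exact N'.subset_closure _
        (insert_subset hfE (diff_subset.trans hB.subset_ground)) (mem_insert_of_mem _ ⟨hx, hxe⟩)
  have h6 := N'.closure_subset_closure_of_subset_closure hBsub
  rwa [hB.closure_eq] at h6

lemma outside_snoc_zero {k : ℕ} (r₁ r₂ : Fin k) (w : Fin k → ZMod 2) :
    {i : Fin (k+1) | i ≠ Fin.castSucc r₁ ∧ i ≠ Fin.castSucc r₂ ∧
        (Fin.snoc w (0 : ZMod 2) : Fin (k+1) → ZMod 2) i ≠ 0}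
      = Fin.castSucc '' {i : Fin k | i ≠ r₁ ∧ i ≠ r₂ ∧ w i ≠ 0} := by
  ext i
  refine Fin.lastCases ?_ (fun i => ?_) i
  · constructor
    · rintro ⟨-, -, h⟩; simp at h
    · rintro ⟨j, -, hj⟩; exact absurd hj (Fin.castSucc_lt_last j).ne
  · constructor
    · rintro ⟨h1, h2, h3⟩
      exact ⟨i, ⟨fun h => h1 (by rw [h]), fun h => h2 (by rw [h]), by simpa using h3⟩, rfl⟩
    · rintro ⟨j, ⟨hj1, hj2, hj3⟩, hj⟩
      have hji : j = i := Fin.castSucc_injective _ hj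
      subst hji
      exact ⟨fun h => hj1 (Fin.castSucc_injective _ h),
        fun h => hj2 (Fin.castSucc_injective _ h), by simpa⟩

lemma outside_snoc_one {k : ℕ} (r₁ r₂ : Fin k) (w : Fin k → ZMod 2) {b : ZMod 2} (hb : b ≠ 0) :
    {i : Fin (k+1) | i ≠ Fin.castSucc r₁ ∧ i ≠ Fin.castSucc r₂ ∧ (Fin.snoc w b : Fin (k+1) → ZMod 2) i ≠ 0}
      = insert (Fin.last k) (Fin.castSucc '' {i : Fin k | i ≠ r₁ ∧ i ≠ r₂ ∧ w i ≠ 0}) := by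
  ext i
  refine Fin.lastCases ?_ (fun i => ?_) i
  · constructor
    · rintro ⟨-, -, -⟩; exact mem_insert _ _
    · intro _
      exact ⟨(Fin.castSucc_lt_last r₁).ne', (Fin.castSucc_lt_last r₂).ne', by simpa⟩
  · constructor
    · rintro ⟨h1, h2, h3⟩
      exact mem_insert_of_mem _
        ⟨i, ⟨fun h => h1 (by rw [h]), fun h => h2 (by rw [h]), by simpa using h3⟩, rfl⟩
    · rintro (h | ⟨j, ⟨hj1, hj2, hj3⟩, hj⟩)
      · exact absurd h (Fin.castSucc_lt_last i).ne
      · have hji : j = i := Fin.castSucc_injective _ hj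
        subst hji
        exact ⟨fun h => hj1 (Fin.castSucc_injective _ h),
          fun h => hj2 (Fin.castSucc_injective _ h), by simpa⟩

lemma ncard_insert_last_image {k : ℕ} (s : Set (Fin k)) :
    (insert (Fin.last k) (Fin.castSucc '' s)).ncard = s.ncard + 1 := by
  rw [Set.ncard_insert_of_notMem (by rintro ⟨j, -, hj⟩; exact (Fin.castSucc_lt_last j).ne hj)
    (Set.toFinite _), Set.ncard_image_of_injective _ (Fin.castSucc_injective k)]

lemma isoTo_ext {α : Type*} (M N : Matroid α) (e f : α) (he : e ∉ M.E)
    (hE : N.E = insert e M.E)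
    {k l : ℕ} (A : Matrix (Fin k) (Fin l) (ZMod 2)) (φ : α → Fin l)
    (hbij : Set.BijOn φ M.E Set.univ)
    (hind : ∀ J ⊆ M.E, (M.Indep J ↔ (colMatroid A).Indep (φ '' J)))
    (z : Fin k → ZMod 2) (ρ : Fin l → ZMod 2)
    (hρ1 : ∀ j₁ j₂, ρ j₁ ≠ 0 → ρ j₂ ≠ 0 → j₁ = j₂)
    (hρ2 : ∀ x ∈ M.E, (ρ (φ x) = 0 ↔ x ≠ f))
    (hχ : ∀ I ⊆ N.E, (N.Indep I ↔ if e ∈ I then M.Indep (I \ {e}) else M.Indep (I \ {f}))) :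
    N.IsoTo (colMatroid ((Matrix.of (extCols (A.transpose) z ρ)).transpose)) := by
  classical
  set A' := (Matrix.of (extCols (A.transpose) z ρ)).transpose with hA'
  set ψ : α → Fin (l+1) := fun x => if x = e then Fin.last l else Fin.castSucc (φ x) with hψ
  have hψe : ψ e = Fin.last l := by simp [hψ]
  have hψm : ∀ x ∈ M.E, ψ x = Fin.castSucc (φ x) := fun x hx => by
    have hxe : x ≠ e := fun h => he (h ▸ hx)
    simp [hψ, hxe]
  refine ⟨ψ, ⟨?_, ?_, ?_⟩, ?_⟩
  · rw [colMatroid_ground]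
    exact fun x _ => mem_univ _
  · intro x hx y hy hxy
    rw [hE] at hx hy
    rcases hx with rfl | hx
    · rcases hy with rfl | hy
      · rfl
      · rw [hψe, hψm y hy] at hxy
        exact absurd hxy.symm (Fin.castSucc_lt_last _).ne
    · rcases hy with rfl | hy
      · rw [hψe, hψm x hx] at hxy
        exact absurd hxy (Fin.castSucc_lt_last _).ne
      · rw [hψm x hx, hψm y hy] at hxy
        exact hbij.injOn hx hy (Fin.castSucc_injective _ hxy)
  · rw [colMatroid_ground]
    intro w _
    by_cases hw : w = Fin.last l
    · exact ⟨e, by rw [hE]; exact mem_insert _ _, by rw [hψe, hw]⟩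
    · have hlt : (w : ℕ) < l :=
        lt_of_le_of_ne (Nat.lt_succ_iff.mp w.isLt) (fun h => hw (Fin.ext (by simp [h])))
      obtain ⟨x, hxE, hx⟩ := hbij.surjOn (mem_univ (⟨(w : ℕ), hlt⟩ : Fin l))
      refine ⟨x, by rw [hE]; exact mem_insert_of_mem _ hxE, ?_⟩
      rw [hψm x hxE, hx]
      exact Fin.ext rfl
  · intro I hI
    rw [hχ I hI, colMatroid_indep_iff]
    by_cases heI : e ∈ I
    · rw [if_pos heI]
      have hsub : I \ {e} ⊆ M.E := by
        intro x hx
        have h7 := hI hx.1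
        rw [hE] at h7
        exact h7.resolve_left hx.2
      have himg : ψ '' I = insert (Fin.last l) (Fin.castSucc '' (φ '' (I \ {e}))) := by
        ext w
        constructor
        · rintro ⟨x, hx, rfl⟩
          by_cases hxe : x = e
          · subst hxe; rw [hψe]; exact mem_insert _ _
          · exact mem_insert_of_mem _
              ⟨φ x, ⟨x, ⟨hx, hxe⟩, rfl⟩, (hψm x (hsub ⟨hx, hxe⟩)).symm⟩
        · rintro (rfl | ⟨j, ⟨x, hx, rfl⟩, rfl⟩)
          · exact ⟨e, heI, hψe⟩
          · exact ⟨x, hx.1, hψm x (hsub hx)⟩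
      rw [himg, hind _ hsub, colMatroid_indep_iff]
      exact (lin1 (A.transpose) z ρ (φ '' (I \ {e}))).symm
    · rw [if_neg heI]
      have hIM : I ⊆ M.E := by
        intro x hx
        have h7 := hI hx
        rw [hE] at h7
        exact h7.resolve_left (fun h => heI (h ▸ hx))
      have himg : ψ '' I = Fin.castSucc '' (φ '' I) := by
        ext w
        constructor
        · rintro ⟨x, hx, rfl⟩
          exact ⟨φ x, ⟨x, hx, rfl⟩, (hψm x (hIM hx)).symm⟩
        · rintro ⟨j, ⟨x, hx, rfl⟩, rfl⟩
          exact ⟨x, hx, hψm x (hIM hx)⟩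
      have hsub : I \ {f} ⊆ M.E := fun x hx => hIM hx.1
      have hset : {j ∈ φ '' I | ρ j = 0} = φ '' (I \ {f}) := by
        ext j
        constructor
        · rintro ⟨⟨x, hx, rfl⟩, h0⟩
          exact ⟨x, ⟨hx, (hρ2 x (hIM hx)).mp h0⟩, rfl⟩
        · rintro ⟨x, ⟨hx, hxf⟩, rfl⟩
          exact ⟨⟨x, hx, rfl⟩, (hρ2 x (hIM hx)).mpr hxf⟩
      rw [himg, hind _ hsub, colMatroid_indep_iff]
      have h8 := lin2 (A.transpose) z ρ hρ1 (φ '' I)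
      rw [hset] at h8
      exact h8.symm

end CoextAux

/-- If `M` is an even-cycle matroid with a blocking pair and `N` is a binary coextension of `M`
by an element `e` (so `N / e = M`) in which `e` is a coloop or belongs to a series pair, then
`N` is an even-cycle matroid with a blocking pair. -/
theorem coextension_evenCycleBP {α : Type*} (M N : Matroid α) (e : α) (he : e ∉ M.E)
    (hE : N.E = insert e M.E) (hbin : N.IsBinary) (hcon : N.con {e} = M)
    (hM : M.IsEvenCycleBP)
    (h : (∀ B, N.IsBase B → e ∈ B) ∨ ∃ f, f ≠ e ∧ (N✶).IsCircuitOf {e, f}) :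
    N.IsEvenCycleBP := by
  classical
  obtain ⟨k, l, A, r₁, r₂, hr12, hBP, φ, hbij, hindM⟩ := hM
  rw [colMatroid_ground] at hbij
  have heN : e ∈ N.E := by rw [hE]; exact mem_insert _ _
  have hC1 : N.Indep {e} → ∀ I, I ⊆ N.E → e ∈ I → (N.Indep I ↔ M.Indep (I \ {e})) := by
    intro henl I hIE heI
    have h1 : I \ {e} ⊆ N.E \ {e} := fun x hx => ⟨hIE hx.1, hx.2⟩
    rw [← hcon, con_singleton_indep_iff N henl h1, insert_diff_singleton,
      insert_eq_self.2 heI]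
  have hr12' : Fin.castSucc r₁ ≠ Fin.castSucc r₂ := fun h' => hr12 (Fin.castSucc_injective _ h')
  rcases h with hcol | ⟨f, hfe, hC⟩
  · -- ----------------- coloop case -----------------
    have henl : N.Indep {e} := by
      obtain ⟨B, hB⟩ := N.exists_isBase
      exact hB.indep.subset (singleton_subset_iff.2 (hcol B hB))
    have hχ : ∀ I, I ⊆ N.E →
        (N.Indep I ↔ if e ∈ I then M.Indep (I \ {e}) else M.Indep (I \ {e})) := by
      intro I hIE
      split_ifs with heI
      · exact hC1 henl I hIE heI
      · rw [Set.diff_singleton_eq_self heI]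
        constructor
        · intro hI
          obtain ⟨B, hB, hsub⟩ := hI.exists_isBase_superset
          have h2 : N.Indep (insert e I) := hB.indep.subset (insert_subset (hcol B hB) hsub)
          have h3 := (hC1 henl (insert e I) (insert_subset heN hIE) (mem_insert _ _)).mp h2
          rwa [Set.insert_diff_self_of_notMem heI] at h3
        · intro hI
          have h3 := (hC1 henl (insert e I) (insert_subset heN hIE) (mem_insert _ _)).mpr
            (by rwa [Set.insert_diff_self_of_notMem heI])
          exact h3.subset (subset_insert _ _)
    refine ⟨k+1, l+1,
      (Matrix.of (extCols (A.transpose) (0 : Fin k → ZMod 2) (0 : Fin l → ZMod 2))).transpose,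
      Fin.castSucc r₁, Fin.castSucc r₂, hr12', ?_, ?_⟩
    · -- blocking pair property
      set A' := (Matrix.of
        (extCols (A.transpose) (0 : Fin k → ZMod 2) (0 : Fin l → ZMod 2))).transpose with hA'
      intro j'
      refine Fin.lastCases ?_ (fun j => ?_) j'
      · left
        have hcols : ∀ i, A' i (Fin.last l) =
            (Fin.snoc (0 : Fin k → ZMod 2) (1 : ZMod 2) : Fin (k+1) → ZMod 2) i := by
          intro i
          show extCols (A.transpose) 0 0 (Fin.last l) i = _
          rw [extCols_last (A.transpose)]
          rfl
        have hs : {i : Fin (k+1) | i ≠ Fin.castSucc r₁ ∧ i ≠ Fin.castSucc r₂ ∧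
            A' i (Fin.last l) ≠ 0} = insert (Fin.last k)
            (Fin.castSucc '' {i : Fin k | i ≠ r₁ ∧ i ≠ r₂ ∧ (0 : Fin k → ZMod 2) i ≠ 0}) := by
          simp only [hcols]
          exact outside_snoc_one r₁ r₂ _ one_ne_zero
        have h0 : {i : Fin k | i ≠ r₁ ∧ i ≠ r₂ ∧ (0 : Fin k → ZMod 2) i ≠ 0} = ∅ := by
          ext i; simp
        rw [hs, h0, ncard_insert_last_image, Set.ncard_empty]
      · have hcols : ∀ i, A' i (Fin.castSucc j) =
            (Fin.snoc (fun i => A i j) (0 : ZMod 2) : Fin (k+1) → ZMod 2) i := by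
          intro i
          show extCols (A.transpose) 0 0 (Fin.castSucc j) i = _
          rw [extCols_castSucc_eq_snoc (A.transpose)]
          induction i using Fin.lastCases <;> simp
        have hs : {i : Fin (k+1) | i ≠ Fin.castSucc r₁ ∧ i ≠ Fin.castSucc r₂ ∧
            A' i (Fin.castSucc j) ≠ 0}
            = Fin.castSucc '' {i : Fin k | i ≠ r₁ ∧ i ≠ r₂ ∧ A i j ≠ 0} := by
          simp only [hcols]
          exact outside_snoc_zero r₁ r₂ _
        rcases hBP j with h1 | ⟨h2, h3, h4⟩
        · left
          rw [hs, Set.ncard_image_of_injective _ (Fin.castSucc_injective k)]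
          exact h1
        · right
          refine ⟨?_, ?_, ?_⟩
          · rw [hs, Set.ncard_image_of_injective _ (Fin.castSucc_injective k)]
            exact h2
          · rw [hcols]; simpa using h3
          · rw [hcols]; simpa using h4
    · exact isoTo_ext M N e e he hE A φ hbij hindM 0 0
        (fun j₁ j₂ h1 _ => absurd rfl h1)
        (fun x hx => iff_of_true rfl (fun h' => he (h' ▸ hx)))
        (fun I hI => hχ I hI)
  · -- ----------------- series case -----------------
    obtain ⟨hsubC, hdep, hss⟩ := hC
    have hss1 : ({f} : Set α) ⊂ ({e, f} : Set α) :=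
      (Set.ssubset_iff_of_subset (singleton_subset_iff.2 (mem_insert_of_mem _ (mem_singleton f)))).mpr
        ⟨e, mem_insert _ _, fun h' => hfe (mem_singleton_iff.mp h').symm⟩
    have hss2 : ({e} : Set α) ⊂ ({e, f} : Set α) :=
      (Set.ssubset_iff_of_subset (singleton_subset_iff.2 (mem_insert _ _))).mpr
        ⟨f, mem_insert_of_mem _ (mem_singleton f), fun h' => hfe (mem_singleton_iff.mp h')⟩
    have hfi : N✶.Indep {f} := hss _ hss1
    have hei' : N✶.Indep {e} := hss _ hss2
    have hfN : f ∈ N.E := hsubC (mem_insert_of_mem _ (mem_singleton f))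
    have hfM : f ∈ M.E := by
      have h7 := hfN
      rw [hE] at h7
      exact h7.resolve_left hfe
    have hNdual : ∀ X : Set α, X ⊆ N.E → (N.Indep X ↔ ∃ B, N✶.IsBase B ∧ Disjoint X B) := by
      intro X hX
      conv_lhs => rw [← dual_dual N]
      rw [dual_indep_iff_exists']
      exact and_iff_right hX
    have henl : N.Indep {e} := by
      rw [hNdual _ (singleton_subset_iff.2 heN)]
      obtain ⟨B, hB⟩ := N✶.exists_isBase
      by_cases heB : e ∈ B
      · have hfB : f ∉ B := fun hfB =>
          hdep (hB.indep.subset (insert_subset heB (singleton_subset_iff.2 hfB)))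
        refine ⟨insert f (B \ {e}), swap_base hfe.symm hdep hfi hB heB hfB, ?_⟩
        refine disjoint_left.mpr ?_
        intro x hx
        rw [mem_singleton_iff] at hx
        subst hx
        rintro (h' | h')
        · exact hfe (mem_singleton_iff.mp h').symm
        · exact h'.2 rfl
      · exact ⟨B, hB, disjoint_singleton_left.mpr heB⟩
    have hswap : ∀ I, I ⊆ N.E → e ∉ I → (N.Indep I ↔ N.Indep (insert e (I \ {f}))) := by
      intro I hIE heI
      rw [hNdual I hIE, hNdual _ (insert_subset heN (fun x hx => hIE hx.1))]
      constructor
      · rintro ⟨B, hB, hd⟩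
        by_cases heB : e ∈ B
        · have hfB : f ∉ B := fun hfB =>
            hdep (hB.indep.subset (insert_subset heB (singleton_subset_iff.2 hfB)))
          refine ⟨insert f (B \ {e}), swap_base hfe.symm hdep hfi hB heB hfB,
            disjoint_left.mpr ?_⟩
          rintro x (rfl | ⟨hxI, hxf⟩)
          · rintro (h' | h')
            · exact hfe (mem_singleton_iff.mp h').symm
            · exact h'.2 rfl
          · rintro (h' | h')
            · exact hxf h'
            · exact disjoint_left.mp hd hxI h'.1
        · refine ⟨B, hB, disjoint_left.mpr ?_⟩
          rintro x (rfl | ⟨hxI, -⟩)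
          · exact heB
          · exact disjoint_left.mp hd hxI
      · rintro ⟨B, hB, hd⟩
        have heB : e ∉ B := fun heB => disjoint_left.mp hd (mem_insert _ _) heB
        by_cases hfB : f ∈ B
        · have hdep' : ¬ N✶.Indep {f, e} := by rwa [Set.pair_comm]
          have hB' := swap_base hfe hdep' hei' hB hfB heB
          refine ⟨insert e (B \ {f}), hB', disjoint_left.mpr ?_⟩
          intro x hxI
          rintro (h' | h')
          · exact heI (mem_singleton_iff.mp h' ▸ hxI)
          · by_cases hxf : x = f
            · exact h'.2 hxf
            · exact disjoint_left.mp hd (mem_insert_of_mem _ ⟨hxI, hxf⟩) h'.1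
        · refine ⟨B, hB, disjoint_left.mpr fun x hxI hxB => ?_⟩
          by_cases hxf : x = f
          · exact hfB (hxf ▸ hxB)
          · exact disjoint_left.mp hd (mem_insert_of_mem _ ⟨hxI, hxf⟩) hxB
    have hχ : ∀ I, I ⊆ N.E →
        (N.Indep I ↔ if e ∈ I then M.Indep (I \ {e}) else M.Indep (I \ {f})) := by
      intro I hIE
      split_ifs with heI
      · exact hC1 henl I hIE heI
      · rw [hswap I hIE heI,
          hC1 henl _ (insert_subset heN fun x hx => hIE hx.1) (mem_insert _ _),
          Set.insert_diff_self_of_notMem (fun h' => heI h'.1)]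
    -- construction data
    set j₀ := φ f with hj₀
    set ρ : Fin l → ZMod 2 := fun j => if j = j₀ then 1 else 0 with hρdef
    have hρ1 : ∀ j₁ j₂, ρ j₁ ≠ 0 → ρ j₂ ≠ 0 → j₁ = j₂ := by
      intro j₁ j₂ h1 h2
      have e1 : j₁ = j₀ := by by_contra hc; exact h1 (if_neg hc)
      have e2 : j₂ = j₀ := by by_contra hc; exact h2 (if_neg hc)
      rw [e1, e2]
    have hρ2 : ∀ x ∈ M.E, (ρ (φ x) = 0 ↔ x ≠ f) := by
      intro x hx
      constructor
      · intro h0 hxf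
        subst hxf
        rw [hρdef] at h0
        simp at h0
        exact h0 hj₀.symm
      · intro hxf
        have hne : φ x ≠ j₀ := fun hc => hxf (hbij.injOn hx hfM hc)
        rw [hρdef]
        simp [hne]
    have hz2 : ∀ a : ZMod 2, a ≠ 0 → a + 1 = 0 := by decide
    by_cases hS : ({i : Fin k | i ≠ r₁ ∧ i ≠ r₂ ∧ A i j₀ ≠ 0}).Nonempty
    · -- z = indicator of u
      obtain ⟨u, hu⟩ := hS
      have hu1 : u ≠ r₁ := hu.1
      have hu2 : u ≠ r₂ := hu.2.1
      have hu3 : A u j₀ ≠ 0 := hu.2.2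
      set z : Fin k → ZMod 2 := fun i => if i = u then 1 else 0 with hzdef
      have hzu : ∀ i, i ≠ u → z i = 0 := fun i hi => if_neg hi
      refine ⟨k+1, l+1, (Matrix.of (extCols (A.transpose) z ρ)).transpose,
        Fin.castSucc r₁, Fin.castSucc r₂, hr12', ?_,
        isoTo_ext M N e f he hE A φ hbij hindM z ρ hρ1 hρ2 (fun I hI => hχ I hI)⟩
      set A' := (Matrix.of (extCols (A.transpose) z ρ)).transpose with hA'
      intro j'
      refine Fin.lastCases ?_ (fun j => ?_) j'
      · -- last column
        have hcols : ∀ i, A' i (Fin.last l) =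
            (Fin.snoc z (1 : ZMod 2) : Fin (k+1) → ZMod 2) i := by
          intro i
          show extCols (A.transpose) z ρ (Fin.last l) i = _
          rw [extCols_last (A.transpose)]
          rfl
        have hs : {i : Fin (k+1) | i ≠ Fin.castSucc r₁ ∧ i ≠ Fin.castSucc r₂ ∧
            A' i (Fin.last l) ≠ 0} = insert (Fin.last k)
            (Fin.castSucc '' {i : Fin k | i ≠ r₁ ∧ i ≠ r₂ ∧ z i ≠ 0}) := by
          simp only [hcols]
          exact outside_snoc_one r₁ r₂ _ one_ne_zero
        have hzset : {i : Fin k | i ≠ r₁ ∧ i ≠ r₂ ∧ z i ≠ 0} = {u} := by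
          ext i
          simp only [mem_setOf_eq, mem_singleton_iff]
          constructor
          · rintro ⟨-, -, h3⟩
            by_contra hc
            exact h3 (hzu i hc)
          · rintro rfl
            refine ⟨hu1, hu2, ?_⟩
            rw [hzdef]
            simp
        right
        refine ⟨?_, ?_, ?_⟩
        · rw [hs, hzset, ncard_insert_last_image, Set.ncard_singleton]
        · rw [hcols]
          have hr1u : r₁ ≠ u := fun h' => hu1 h'.symm
          simp [hzu r₁ hr1u]
        · rw [hcols]
          have hr2u : r₂ ≠ u := fun h' => hu2 h'.symm
          simp [hzu r₂ hr2u]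
      · by_cases hjj : j = j₀
        · -- the modified column
          rw [hjj]
          have hcols : ∀ i, A' i (Fin.castSucc j₀) =
              (Fin.snoc (fun i => A i j₀ + z i) (1 : ZMod 2) : Fin (k+1) → ZMod 2) i := by
            intro i
            show extCols (A.transpose) z ρ (Fin.castSucc j₀) i = _
            rw [extCols_castSucc_eq_snoc (A.transpose)]
            have hρj : ρ j₀ = 1 := if_pos rfl
            induction i using Fin.lastCases <;> simp [hρj]
          have hs : {i : Fin (k+1) | i ≠ Fin.castSucc r₁ ∧ i ≠ Fin.castSucc r₂ ∧
              A' i (Fin.castSucc j₀) ≠ 0} = insert (Fin.last k)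
              (Fin.castSucc '' {i : Fin k | i ≠ r₁ ∧ i ≠ r₂ ∧ A i j₀ + z i ≠ 0}) := by
            simp only [hcols]
            exact outside_snoc_one r₁ r₂ _ one_ne_zero
          have hS' : {i : Fin k | i ≠ r₁ ∧ i ≠ r₂ ∧ A i j₀ + z i ≠ 0}
              = {i : Fin k | i ≠ r₁ ∧ i ≠ r₂ ∧ A i j₀ ≠ 0} \ {u} := by
            ext i
            simp only [mem_setOf_eq, mem_diff, mem_singleton_iff]
            by_cases hiu : i = u
            · subst hiu
              constructor
              · rintro ⟨-, -, h3⟩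
                rw [hzdef] at h3
                simp only [if_pos rfl] at h3
                exact absurd (hz2 _ hu3) h3
              · rintro ⟨-, hne⟩
                exact absurd rfl hne
            · rw [hzu i hiu, add_zero]
              constructor
              · rintro ⟨a, b, c⟩
                exact ⟨⟨a, b, c⟩, hiu⟩
              · rintro ⟨⟨a, b, c⟩, -⟩
                exact ⟨a, b, c⟩
          rcases hBP j₀ with h1 | ⟨h2, h3, h4⟩
          · left
            have hSu : {i : Fin k | i ≠ r₁ ∧ i ≠ r₂ ∧ A i j₀ ≠ 0} = {u} :=
              Set.eq_singleton_iff_unique_mem.mpr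
                ⟨hu, fun x hx => (Set.ncard_le_one (Set.toFinite _)).mp h1 x hx u hu⟩
            rw [hs, hS', hSu, Set.diff_self, Set.image_empty]
            simp
          · right
            have hr1u : r₁ ≠ u := fun h' => hu1 h'.symm
            have hr2u : r₂ ≠ u := fun h' => hu2 h'.symm
            refine ⟨?_, ?_, ?_⟩
            · rw [hs, hS', ncard_insert_last_image,
                Set.ncard_diff_singleton_of_mem hu, h2]
            · rw [hcols]
              simp [hzu r₁ hr1u, h3]
            · rw [hcols]
              simp [hzu r₂ hr2u, h4]
        · -- unmodified columns
          have hρj : ρ j = 0 := if_neg hjj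
          have hcols : ∀ i, A' i (Fin.castSucc j) =
              (Fin.snoc (fun i => A i j) (0 : ZMod 2) : Fin (k+1) → ZMod 2) i := by
            intro i
            show extCols (A.transpose) z ρ (Fin.castSucc j) i = _
            rw [extCols_castSucc_eq_snoc (A.transpose)]
            induction i using Fin.lastCases <;> simp [hρj]
          have hs : {i : Fin (k+1) | i ≠ Fin.castSucc r₁ ∧ i ≠ Fin.castSucc r₂ ∧
              A' i (Fin.castSucc j) ≠ 0}
              = Fin.castSucc '' {i : Fin k | i ≠ r₁ ∧ i ≠ r₂ ∧ A i j ≠ 0} := by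
            simp only [hcols]
            exact outside_snoc_zero r₁ r₂ _
          rcases hBP j with h1 | ⟨h2, h3, h4⟩
          · left
            rw [hs, Set.ncard_image_of_injective _ (Fin.castSucc_injective k)]
            exact h1
          · right
            refine ⟨?_, ?_, ?_⟩
            · rw [hs, Set.ncard_image_of_injective _ (Fin.castSucc_injective k)]
              exact h2
            · rw [hcols]; simpa using h3
            · rw [hcols]; simpa using h4
    · -- z = 0 : the column of f meets only the blocking pair
      have hSempty : {i : Fin k | i ≠ r₁ ∧ i ≠ r₂ ∧ A i j₀ ≠ 0} = ∅ :=
        Set.not_nonempty_iff_eq_empty.mp hS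
      refine ⟨k+1, l+1, (Matrix.of (extCols (A.transpose) (0 : Fin k → ZMod 2) ρ)).transpose,
        Fin.castSucc r₁, Fin.castSucc r₂, hr12', ?_,
        isoTo_ext M N e f he hE A φ hbij hindM 0 ρ hρ1 hρ2 (fun I hI => hχ I hI)⟩
      set A' := (Matrix.of (extCols (A.transpose) (0 : Fin k → ZMod 2) ρ)).transpose with hA'
      intro j'
      refine Fin.lastCases ?_ (fun j => ?_) j'
      · left
        have hcols : ∀ i, A' i (Fin.last l) =
            (Fin.snoc (0 : Fin k → ZMod 2) (1 : ZMod 2) : Fin (k+1) → ZMod 2) i := by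
          intro i
          show extCols (A.transpose) 0 ρ (Fin.last l) i = _
          rw [extCols_last (A.transpose)]
          rfl
        have hs : {i : Fin (k+1) | i ≠ Fin.castSucc r₁ ∧ i ≠ Fin.castSucc r₂ ∧
            A' i (Fin.last l) ≠ 0} = insert (Fin.last k)
            (Fin.castSucc '' {i : Fin k | i ≠ r₁ ∧ i ≠ r₂ ∧ (0 : Fin k → ZMod 2) i ≠ 0}) := by
          simp only [hcols]
          exact outside_snoc_one r₁ r₂ _ one_ne_zero
        have h0 : {i : Fin k | i ≠ r₁ ∧ i ≠ r₂ ∧ (0 : Fin k → ZMod 2) i ≠ 0} = ∅ := by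
          ext i; simp
        rw [hs, h0, ncard_insert_last_image, Set.ncard_empty]
      · by_cases hjj : j = j₀
        · rw [hjj]
          have hcols : ∀ i, A' i (Fin.castSucc j₀) =
              (Fin.snoc (fun i => A i j₀) (1 : ZMod 2) : Fin (k+1) → ZMod 2) i := by
            intro i
            show extCols (A.transpose) 0 ρ (Fin.castSucc j₀) i = _
            rw [extCols_castSucc_eq_snoc (A.transpose)]
            have hρj : ρ j₀ = 1 := if_pos rfl
            induction i using Fin.lastCases <;> simp [hρj]
          have hs : {i : Fin (k+1) | i ≠ Fin.castSucc r₁ ∧ i ≠ Fin.castSucc r₂ ∧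
              A' i (Fin.castSucc j₀) ≠ 0} = insert (Fin.last k)
              (Fin.castSucc '' {i : Fin k | i ≠ r₁ ∧ i ≠ r₂ ∧ A i j₀ ≠ 0}) := by
            simp only [hcols]
            exact outside_snoc_one r₁ r₂ _ one_ne_zero
          left
          rw [hs, hSempty, Set.image_empty]
          simp
        · have hρj : ρ j = 0 := if_neg hjj
          have hcols : ∀ i, A' i (Fin.castSucc j) =
              (Fin.snoc (fun i => A i j) (0 : ZMod 2) : Fin (k+1) → ZMod 2) i := by
            intro i
            show extCols (A.transpose) 0 ρ (Fin.castSucc j) i = _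
            rw [extCols_castSucc_eq_snoc (A.transpose)]
            induction i using Fin.lastCases <;> simp [hρj]
          have hs : {i : Fin (k+1) | i ≠ Fin.castSucc r₁ ∧ i ≠ Fin.castSucc r₂ ∧
              A' i (Fin.castSucc j) ≠ 0}
              = Fin.castSucc '' {i : Fin k | i ≠ r₁ ∧ i ≠ r₂ ∧ A i j ≠ 0} := by
            simp only [hcols]
            exact outside_snoc_zero r₁ r₂ _
          rcases hBP j with h1 | ⟨h2, h3, h4⟩
          · left
            rw [hs, Set.ncard_image_of_injective _ (Fin.castSucc_injective k)]
            exact h1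
          · right
            refine ⟨?_, ?_, ?_⟩
            · rw [hs, Set.ncard_image_of_injective _ (Fin.castSucc_injective k)]
              exact h2
            · rw [hcols]; simpa using h3
            · rw [hcols]; simpa using h4
end
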